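/- Fix N ≥ 1, ν ∈ [0,1), χ ∈ (0,1), and λ_1,...,λ_N ≥ 0 with ∑_{j=1}^N λ_j = 1. If (J_1,...,J_N, h) ∈ ℝ^{N+1} satisfies the N+1 matching equations Λ( h - ∑_{j≤k} J_j + ∑_{j>k} J_j ) = ν ∑_{j>k} λ_j + (1-ν) χ for every k = 0, 1, ..., N, where Λ(x) = e^{2x}/(1+e^{2x}), then J_k ≥ 0 for every k = 1,...,N. -/

import Mathlib

/-- The logistic function `Λ(x) = e^{2x}/(1 + e^{2x})`. -/
noncomputable def Lam (x : ℝ) : ℝ := Real.exp (2 * x) / (1 + Real.exp (2 * x))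

lemma lam_strictMono : StrictMono Lam := by
  intro a b hab
  unfold Lam
  have hea := Real.exp_pos (2 * a)
  have heb := Real.exp_pos (2 * b)
  have h1 : Real.exp (2 * a) < Real.exp (2 * b) := Real.exp_lt_exp.mpr (by linarith)
  rw [div_lt_div_iff₀ (by linarith) (by linarith)]
  nlinarith

theorem stmt_12 (N : ℕ) (hN : 1 ≤ N) (ν χ : ℝ) (lam : Fin N → ℝ)
    (hν : ν ∈ Set.Ico (0 : ℝ) 1) (hχ : χ ∈ Set.Ioo (0 : ℝ) 1)
    (hlam : ∀ j, 0 ≤ lam j) (hsum : ∑ j, lam j = 1)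
    (J : Fin N → ℝ) (h : ℝ)
    (hmatch : ∀ k : ℕ, k ≤ N →
      Lam (h - (∑ j ∈ Finset.univ.filter (fun j : Fin N => (j : ℕ) < k), J j)
            + (∑ j ∈ Finset.univ.filter (fun j : Fin N => k ≤ (j : ℕ)), J j))
        = ν * (∑ j ∈ Finset.univ.filter (fun j : Fin N => k ≤ (j : ℕ)), lam j)
          + (1 - ν) * χ) :
    ∀ k : Fin N, 0 ≤ J k := by
  intro k
  have hm : (k : ℕ) < N := k.isLt
  have h1 := hmatch (k : ℕ) (le_of_lt hm)
  have h2 := hmatch ((k : ℕ) + 1) hm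
  have hsetlt : Finset.univ.filter (fun j : Fin N => (j : ℕ) < (k : ℕ) + 1)
      = insert k (Finset.univ.filter (fun j : Fin N => (j : ℕ) < (k : ℕ))) := by
    ext j
    simp only [Finset.mem_insert, Finset.mem_filter, Finset.mem_univ, true_and, Fin.ext_iff]
    omega
  have hsetge : Finset.univ.filter (fun j : Fin N => (k : ℕ) ≤ (j : ℕ))
      = insert k (Finset.univ.filter (fun j : Fin N => (k : ℕ) + 1 ≤ (j : ℕ))) := by
    ext j
    simp only [Finset.mem_insert, Finset.mem_filter, Finset.mem_univ, true_and, Fin.ext_iff]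
    omega
  have hk1 : k ∉ Finset.univ.filter (fun j : Fin N => (j : ℕ) < (k : ℕ)) := by simp
  have hk2 : k ∉ Finset.univ.filter (fun j : Fin N => (k : ℕ) + 1 ≤ (j : ℕ)) := by simp
  rw [hsetlt, Finset.sum_insert hk1] at h2
  rw [hsetge, Finset.sum_insert hk2, Finset.sum_insert hk2] at h1
  have hle : Lam (h - ((J k + ∑ j ∈ Finset.univ.filter (fun j : Fin N => (j : ℕ) < (k : ℕ)), J j))
      + ∑ j ∈ Finset.univ.filter (fun j : Fin N => (k : ℕ) + 1 ≤ (j : ℕ)), J j)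
      ≤ Lam (h - (∑ j ∈ Finset.univ.filter (fun j : Fin N => (j : ℕ) < (k : ℕ)), J j)
      + (J k + ∑ j ∈ Finset.univ.filter (fun j : Fin N => (k : ℕ) + 1 ≤ (j : ℕ)), J j)) := by
    rw [h1, h2]
    have := hlam k
    nlinarith [hν.1]
  have := (lam_strictMono.le_iff_le).mp hle
  linarith
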